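/- Let n > 0, d > 0, j ≥ 1 an integer with n·d² < 1/j², and let α = 2/(√(1 + 4/(n·d²)) - 1). Then the forward-learning ESS bound satisfies n·(1 + ((1+α)^{2j-1} - 1 - α)/(α·(1+α)^{2j-1} + α)) ≥ n·(1 + (j-1)/(1+φ)) ≥ n·(1 + (j-1)/3), where φ is the golden ratio. -/

import Mathlib

set_option maxHeartbeats 2000000 in
/-- In the regime `n d² < 1/j²`, the forward-learning ESS bound with
`α = 2/(√(1 + 4/(n d²)) - 1)` satisfies
`n (1 + ((1+α)^{2j-1} - 1 - α)/(α(1+α)^{2j-1} + α)) ≥ n (1 + (j-1)/(1+φ))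
 ≥ n (1 + (j-1)/3)`, where `φ = (1+√5)/2` is the golden ratio. -/
theorem forward_ess_linear_growth (n d : ℝ) (hn : 0 < n) (hd : 0 < d)
    (j : ℕ) (hj : 1 ≤ j) (hsmall : n * d ^ 2 < 1 / (j : ℝ) ^ 2)
    (α : ℝ) (hα : α = 2 / (Real.sqrt (1 + 4 / (n * d ^ 2)) - 1)) :
    n * (1 + ((1 + α) ^ (2 * j - 1) - 1 - α) / (α * (1 + α) ^ (2 * j - 1) + α)) ≥
        n * (1 + ((j : ℝ) - 1) / (1 + (1 + Real.sqrt 5) / 2)) ∧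
    n * (1 + ((j : ℝ) - 1) / (1 + (1 + Real.sqrt 5) / 2)) ≥
        n * (1 + ((j : ℝ) - 1) / 3) := by
  obtain ⟨k, rfl⟩ : ∃ k, j = k + 1 := ⟨j - 1, (Nat.succ_pred_eq_of_pos hj).symm⟩
  set φ : ℝ := (1 + Real.sqrt 5) / 2 with hφdef
  have h5 : Real.sqrt 5 ^ 2 = 5 := Real.sq_sqrt (by norm_num)
  have h5pos : 1 < Real.sqrt 5 := by nlinarith [Real.sqrt_nonneg 5]
  have h5lt : Real.sqrt 5 < 3 := by nlinarith [Real.sqrt_nonneg 5]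
  have hφ1 : 1 < φ := by rw [hφdef]; linarith
  have hφsq : φ ^ 2 = φ + 1 := by rw [hφdef]; nlinarith
  set x : ℝ := n * d ^ 2 with hxdef
  have hx : 0 < x := by positivity
  set s : ℝ := Real.sqrt (1 + 4 / x) with hsdef
  have hs2 : s ^ 2 = 1 + 4 / x := Real.sq_sqrt (by positivity)
  have hs1 : 1 < s := by
    nlinarith [Real.sqrt_nonneg (1 + 4 / x), div_pos (by norm_num : (0:ℝ) < 4) hx]
  have hs0 : s - 1 ≠ 0 := by linarith
  have hα0 : 0 < α := by rw [hα]; exact div_pos (by norm_num) (by linarith)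
  have hα1 : (0:ℝ) < 1 + α := by linarith
  have hαs : α * s = 2 + α := by rw [hα]; field_simp; ring
  have hxs : x * s ^ 2 = x + 4 := by rw [hs2]; field_simp
  have hfα : α ^ 2 = x * (1 + α) := by
    linear_combination (x * (α * s + 2 + α) / 4) * hαs - (α ^ 2 / 4) * hxs
  have hk0 : (0:ℝ) ≤ (k:ℝ) := Nat.cast_nonneg k
  have hj0 : (0:ℝ) < ((k:ℝ) + 1) ^ 2 := by positivity
  have hsmall' : x * ((k:ℝ) + 1) ^ 2 < 1 := by
    push_cast at hsmall
    exact (lt_div_iff₀ hj0).1 hsmall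
  -- key bound: α (k+1) ≤ φ
  have hαφ : α * ((k:ℝ) + 1) ≤ φ := by
    by_contra h
    push_neg at h
    have hu2 : (α * ((k:ℝ) + 1)) ^ 2 < 1 + α := by
      calc (α * ((k:ℝ) + 1)) ^ 2 = x * (((k:ℝ) + 1) ^ 2) * (1 + α) := by
            linear_combination (((k:ℝ) + 1) ^ 2) * hfα
        _ < 1 * (1 + α) := mul_lt_mul_of_pos_right hsmall' hα1
        _ = 1 + α := one_mul _
    have hαu : α ≤ α * ((k:ℝ) + 1) := by nlinarith [mul_nonneg hα0.le hk0]
    have hpos : (0:ℝ) < α * ((k:ℝ) + 1) + φ - 1 := by linarith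
    have hexp : (α * ((k:ℝ) + 1) - φ) * (α * ((k:ℝ) + 1) + φ - 1)
        = (α * ((k:ℝ) + 1)) ^ 2 - α * ((k:ℝ) + 1) - φ ^ 2 + φ := by ring
    have := mul_pos (sub_pos.2 h) hpos
    linarith [hexp ▸ this]
  have hkαφ : (k:ℝ) * α ≤ φ := by nlinarith
  have hBern : 1 + (2 * k : ℕ) * α ≤ (1 + α) ^ (2 * k) := one_add_mul_le_pow (by linarith) (2 * k)
  have hm : 2 * (k + 1) - 1 = 2 * k + 1 := by omega
  rw [hm]
  set t : ℝ := (1 + α) ^ (2 * k + 1) with htdef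
  have ht : (1 + α) * (1 + 2 * (k:ℝ) * α) ≤ t := by
    have hb : 1 + 2 * (k:ℝ) * α ≤ (1 + α) ^ (2 * k) := by push_cast at hBern; linarith
    calc (1 + α) * (1 + 2 * (k:ℝ) * α) = (1 + 2 * (k:ℝ) * α) * (1 + α) := by ring
      _ ≤ (1 + α) ^ (2 * k) * (1 + α) := mul_le_mul_of_nonneg_right hb hα1.le
      _ = t := by rw [htdef, pow_succ]
  have htpos : 0 < t := pow_pos hα1 _
  have hD : 0 < α * t + α := by positivity
  have h1φ : (0:ℝ) < 1 + φ := by linarith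
  have hmain : (k:ℝ) / (1 + φ) ≤ (t - 1 - α) / (α * t + α) := by
    have hcoef : (0:ℝ) ≤ 1 + φ - (k:ℝ) * α := by linarith
    have hsuff : (k:ℝ) * α + (1 + α) * (1 + φ)
        ≤ (1 + φ - (k:ℝ) * α) * ((1 + α) * (1 + 2 * (k:ℝ) * α)) := by
      nlinarith [mul_nonneg (mul_nonneg hk0 hα0.le) (sub_nonneg.2 hkαφ),
        mul_nonneg (mul_nonneg (mul_nonneg hk0 hα0.le) hα0.le) (sub_nonneg.2 hkαφ),
        mul_nonneg (mul_nonneg hk0 hα0.le) hα0.le]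
    have key := mul_le_mul_of_nonneg_left ht hcoef
    rw [div_le_div_iff₀ h1φ hD]
    nlinarith [key, hsuff]
  constructor
  · rw [ge_iff_le]
    refine mul_le_mul_of_nonneg_left (add_le_add_right ?_ 1) hn.le
    push_cast
    simpa using hmain
  · rw [ge_iff_le]
    refine mul_le_mul_of_nonneg_left (add_le_add_right ?_ 1) hn.le
    push_cast
    have h2 : ((k:ℝ)) / (1 + φ) ≥ ((k:ℝ)) / 3 :=
      div_le_div_of_nonneg_left hk0 (by linarith) (by linarith)
    simpa using h2
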